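/- Let L be a nondegenerate even lattice of rank n with Gram matrix Q, let s be a nonzero integer such that (1/s)Q is an integer matrix, and let g ∈ O(L) lie in the discriminant kernel (i.e., (g - I)Q^{-1} is integral). Then g^s lies in the discriminant kernel of L(s), i.e., (g^s - I)(sQ)^{-1} is an integer matrix. -/
import Mathlib


open Matrix

private lemma step_eq (n : ℕ) (s : ℤ) (Q₀ A P : Matrix (Fin n) (Fin n) ℤ) :
    (1 + P * (s • Q₀)) * (1 + A * (s • Q₀)) - 1
      = (A + P + s • (P * Q₀ * A)) * (s • Q₀) := by
  simp only [mul_add, add_mul, mul_one, one_mul, Matrix.mul_smul, Matrix.smul_mul,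
    smul_add, smul_smul]
  noncomm_ring

private lemma mapIntCast_mul (n : ℕ) (M N : Matrix (Fin n) (Fin n) ℤ) :
    (M * N).map (Int.cast : ℤ → ℚ) = M.map Int.cast * N.map Int.cast := by
  ext i j
  simp only [Matrix.map_apply, Matrix.mul_apply]
  push_cast
  rfl

private lemma mapIntCast_sub (n : ℕ) (M N : Matrix (Fin n) (Fin n) ℤ) :
    (M - N).map (Int.cast : ℤ → ℚ) = M.map Int.cast - N.map Int.cast := by
  ext i j
  simp [Matrix.map_apply]

private lemma mapIntCast_one (n : ℕ) :
    (1 : Matrix (Fin n) (Fin n) ℤ).map (Int.cast : ℤ → ℚ) = 1 := by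
  ext i j
  simp [Matrix.map_apply, Matrix.one_apply, apply_ite]

private lemma aux_pow (n : ℕ) (s : ℤ) (Q Q₀ A : Matrix (Fin n) (Fin n) ℤ)
    (hQ0 : Q = s • Q₀) (u : GL (Fin n) ℤ)
    (hA : (↑u : Matrix (Fin n) (Fin n) ℤ) - 1 = A * Q) :
    ∀ m : ℕ, ∃ C : Matrix (Fin n) (Fin n) ℤ,
      (↑(u ^ m) : Matrix (Fin n) (Fin n) ℤ) - 1 = ((m : ℤ) • A + s • C) * Q := by
  intro m
  induction m with
  | zero => exact ⟨0, by simp⟩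
  | succ m ih =>
    obtain ⟨C, hC⟩ := ih
    refine ⟨(((m : ℤ) • A + s • C) * Q₀) * A + C, ?_⟩
    have hu : (↑u : Matrix (Fin n) (Fin n) ℤ) = 1 + A * Q := by
      rw [← hA]; noncomm_ring
    have hum : (↑(u ^ m) : Matrix (Fin n) (Fin n) ℤ)
        = 1 + ((m : ℤ) • A + s • C) * Q := by
      rw [← hC]; noncomm_ring
    calc (↑(u ^ (m + 1)) : Matrix (Fin n) (Fin n) ℤ) - 1
        = (1 + ((m : ℤ) • A + s • C) * Q) * (1 + A * Q) - 1 := by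
          rw [pow_succ, Units.val_mul, hum, hu]
      _ = (A + ((m : ℤ) • A + s • C)
            + s • ((((m : ℤ) • A + s • C) * Q₀) * A)) * Q := by
          rw [hQ0]; exact step_eq n s Q₀ A _
      _ = (((m + 1 : ℕ) : ℤ) • A
            + s • ((((m : ℤ) • A + s • C) * Q₀) * A + C)) * Q := by
          congr 1
          push_cast
          module

theorem stmt_7 (n : ℕ) (Q : Matrix (Fin n) (Fin n) ℤ) (hQ : Q.det ≠ 0)
    (hsymm : Qᵀ = Q) (heven : ∀ i, 2 ∣ Q i i) (s : ℤ) (hs : s ≠ 0)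
    (hdiv : ∃ Q₀ : Matrix (Fin n) (Fin n) ℤ, Q = s • Q₀)
    (g : GL (Fin n) ℤ)
    (horth : (g : Matrix (Fin n) (Fin n) ℤ)ᵀ * Q * (g : Matrix (Fin n) (Fin n) ℤ) = Q)
    (hker : ∃ A : Matrix (Fin n) (Fin n) ℤ,
      ((g : Matrix (Fin n) (Fin n) ℤ).map (Int.cast : ℤ → ℚ) - 1) *
        (Q.map (Int.cast : ℤ → ℚ))⁻¹ = A.map (Int.cast : ℤ → ℚ)) :
    ∃ B : Matrix (Fin n) (Fin n) ℤ,
      (((g ^ s : GL (Fin n) ℤ) : Matrix (Fin n) (Fin n) ℤ).map (Int.cast : ℤ → ℚ) - 1) *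
        ((s : ℚ) • Q.map (Int.cast : ℤ → ℚ))⁻¹ = B.map (Int.cast : ℤ → ℚ) := by
  obtain ⟨Q₀, hQ0⟩ := hdiv
  obtain ⟨A, hA⟩ := hker
  have hdetval : (Q.map (Int.cast : ℤ → ℚ)).det = (Q.det : ℚ) := by
    have := (Int.castRingHom ℚ).map_det Q
    simpa [RingHom.mapMatrix_apply] using this.symm
  have hdet : (Q.map (Int.cast : ℤ → ℚ)).det ≠ 0 := by
    rw [hdetval]; exact_mod_cast hQ
  have hQu : IsUnit (Q.map (Int.cast : ℤ → ℚ)).det := isUnit_iff_ne_zero.mpr hdet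
  -- integral version of the kernel condition
  have hAZ : (↑g : Matrix (Fin n) (Fin n) ℤ) - 1 = A * Q := by
    apply Matrix.map_injective (f := (Int.cast : ℤ → ℚ)) Int.cast_injective
    show ((↑g : Matrix (Fin n) (Fin n) ℤ) - 1).map _ = (A * Q).map _
    have h1 : ((↑g : Matrix (Fin n) (Fin n) ℤ).map (Int.cast : ℤ → ℚ) - 1)
          * ((Q.map (Int.cast : ℤ → ℚ))⁻¹ * Q.map (Int.cast : ℤ → ℚ))
        = A.map (Int.cast : ℤ → ℚ) * Q.map (Int.cast : ℤ → ℚ) := by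
      rw [← Matrix.mul_assoc, hA]
    rw [Matrix.nonsing_inv_mul _ hQu, mul_one] at h1
    rw [mapIntCast_sub, mapIntCast_mul, mapIntCast_one]
    exact h1
  -- the inverse is also in the kernel
  have hAZ' : (↑(g⁻¹) : Matrix (Fin n) (Fin n) ℤ) - 1
      = (-((↑(g⁻¹) : Matrix (Fin n) (Fin n) ℤ) * A)) * Q := by
    have h2 : (↑(g⁻¹) : Matrix (Fin n) (Fin n) ℤ) * (A * Q)
        = 1 - (↑(g⁻¹) : Matrix (Fin n) (Fin n) ℤ) := by
      rw [← hAZ, mul_sub, mul_one, ← Units.val_mul, inv_mul_cancel, Units.val_one]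
    rw [neg_mul, Matrix.mul_assoc, h2]
    noncomm_ring
  -- the integral identity  g^s - 1 = s • (B * Q)
  have key : ∃ B : Matrix (Fin n) (Fin n) ℤ,
      (↑(g ^ s) : Matrix (Fin n) (Fin n) ℤ) - 1 = s • (B * Q) := by
    rcases lt_or_gt_of_ne hs with hneg | hpos
    · obtain ⟨C, hC⟩ :=
        aux_pow n s Q Q₀ (-((↑(g⁻¹) : Matrix (Fin n) (Fin n) ℤ) * A)) hQ0 g⁻¹ hAZ' (-s).toNat
      refine ⟨(↑(g⁻¹) : Matrix (Fin n) (Fin n) ℤ) * A + C, ?_⟩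
      have hm : (((-s).toNat : ℤ)) = -s := Int.toNat_of_nonneg (by omega)
      have hpow : g ^ s = g⁻¹ ^ (-s).toNat := by
        rw [inv_pow, ← zpow_natCast, hm, ← _root_.zpow_neg, neg_neg]
      rw [hpow, hC, hm, neg_smul_neg, ← smul_add, Matrix.smul_mul]
    · obtain ⟨C, hC⟩ := aux_pow n s Q Q₀ A hQ0 g hAZ s.toNat
      refine ⟨A + C, ?_⟩
      have hm : ((s.toNat : ℤ)) = s := Int.toNat_of_nonneg (by omega)
      have hpow : g ^ s = g ^ s.toNat := by rw [← zpow_natCast, hm]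
      rw [hpow, hC, hm, ← smul_add, Matrix.smul_mul]
  obtain ⟨B, hB⟩ := key
  refine ⟨B, ?_⟩
  have hsu : ((s : ℚ) • Q.map (Int.cast : ℤ → ℚ)).det ≠ 0 := by
    rw [Matrix.det_smul]
    exact mul_ne_zero (pow_ne_zero _ (by exact_mod_cast hs)) hdet
  have : Invertible ((s : ℚ) • Q.map (Int.cast : ℤ → ℚ)) :=
    (Matrix.isUnit_iff_isUnit_det _ |>.mpr (isUnit_iff_ne_zero.mpr hsu)).invertible
  rw [Matrix.mul_inv_eq_iff_eq_mul_of_invertible]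
  have hmap : ((↑(g ^ s) : Matrix (Fin n) (Fin n) ℤ)).map (Int.cast : ℤ → ℚ) - 1
      = ((↑(g ^ s) : Matrix (Fin n) (Fin n) ℤ) - 1).map (Int.cast : ℤ → ℚ) := by
    rw [mapIntCast_sub, mapIntCast_one]
  have hsmul : ((s • (B * Q) : Matrix (Fin n) (Fin n) ℤ)).map (Int.cast : ℤ → ℚ)
      = (s : ℚ) • ((B * Q).map (Int.cast : ℤ → ℚ)) := by
    ext i j
    simp only [Matrix.map_apply, Matrix.smul_apply, smul_eq_mul]
    push_cast
    rfl
  rw [hmap, hB, hsmul, mapIntCast_mul, Matrix.mul_smul]
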